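/- The function I_{2a} = (u_x²u_{zz} − 2u_xu_zu_{xz} + u_z²u_{xx} + 2u_xu_{yz} − 2u_zu_{xy} + u_{yy})/(x u_x + y u_y + z u_z − u)³ equals Q(v₁,v₁), where Q = d²q|_{TΣ}/(x u_x + y u_y + z u_z − u) is the normalized second differential of the defining function q = −u + u(x,y,z), and v₁ = (x u_x + y u_y + z u_z − u)⁻¹(∂_y − u_z∂_x + u_x∂_z + u_y∂_u). -/

import Mathlib

/-- `I_{2a} = Q(v₁,v₁)` where `Q = d²q|_{TΣ}/ρ` with `ρ = x u_x + y u_y + z u_z − u`,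
and `v₁` has coordinates `ρ⁻¹(−u_z, 1, u_x)` in the tangent basis
`(D_x, D_y, D_z)`, the Gram matrix of `d²q|_{TΣ}` being `(u_{ij})`. -/
theorem stmt_12 (x y z u ux uy uz uxx uxy uxz uyy uyz uzz : ℝ)
    (hρ : x * ux + y * uy + z * uz - u ≠ 0) :
    let ρ := x * ux + y * uy + z * uz - u
    -- d²q|_{TΣ} evaluated on the (un-normalized) vector (−u_z, 1, u_x):
    let B : (ℝ × ℝ × ℝ) → (ℝ × ℝ × ℝ) → ℝ := fun v w =>
      uxx * v.1 * w.1 + uyy * v.2.1 * w.2.1 + uzz * v.2.2 * w.2.2 +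
      uxy * (v.1 * w.2.1 + v.2.1 * w.1) + uxz * (v.1 * w.2.2 + v.2.2 * w.1) +
      uyz * (v.2.1 * w.2.2 + v.2.2 * w.2.1)
    let v1 : ℝ × ℝ × ℝ := (ρ⁻¹ * (-uz), ρ⁻¹ * 1, ρ⁻¹ * ux)
    (ux ^ 2 * uzz - 2 * ux * uz * uxz + uz ^ 2 * uxx + 2 * ux * uyz - 2 * uz * uxy + uyy)
      / ρ ^ 3 = ρ⁻¹ * B v1 v1 := by
  intro ρ B v1
  have key : B v1 v1 = ρ⁻¹ * ρ⁻¹ *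
      (ux ^ 2 * uzz - 2 * ux * uz * uxz + uz ^ 2 * uxx + 2 * ux * uyz - 2 * uz * uxy + uyy) := by
    simp only [B, v1]; ring
  rw [key, div_eq_iff (pow_ne_zero 3 hρ)]
  field_simp
  rw [eq_div_iff (pow_ne_zero 3 hρ)]
  ring
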